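/- Let G be a connected undirected graph with vertex set V = {1,...,n} and edge set E, and let w : E → ℝ≥0 be an edge weighting. Let the objective be F_w(μ) = (1/2)‖Y − μ‖² + λ · Σ_{{i,j}∈E} w(i,j)·𝟙{μ_i ≠ μ_j} for fixed Y ∈ ℝⁿ and λ ≥ 0. Suppose μ̂ ∈ ℝⁿ is a (τ, δℤ)-local-minimizer of F_w, i.e., for every vector μ̃ obtained from μ̂ by replacing the values on an arbitrary subset of vertices by a single common value c ∈ δℤ, one has F_w(μ̂) − τ ≤ F_w(μ̃). Then for any vector μ ∈ (δℤ)ⁿ whose entries take k distinct values, F_w(μ̂) ≤ (1/2)‖Y − μ‖² + 2λ·‖Dμ‖_w + k·τ, where ‖Dμ‖_w = Σ_{{i,j}∈E} w(i,j)·𝟙{μ_i ≠ μ_j}. -/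
import Mathlib


open Finset
open scoped Classical

noncomputable section

/-- Weighted `l0` cut penalty `‖Dμ‖_w = Σ_{{i,j}∈E} w(i,j)·𝟙{μ_i ≠ μ_j}`. -/
def cutW {n : ℕ} (E : Finset (Sym2 (Fin n))) (w : Sym2 (Fin n) → ℝ) (μ : Fin n → ℝ) : ℝ :=
  ∑ e ∈ E, if ∃ i ∈ e, ∃ j ∈ e, μ i ≠ μ j then w e else 0

/-- The objective `F_w(μ) = (1/2)‖Y − μ‖² + λ·‖Dμ‖_w`. -/
def Fw {n : ℕ} (E : Finset (Sym2 (Fin n))) (w : Sym2 (Fin n) → ℝ) (Y : Fin n → ℝ) (lam : ℝ)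
    (μ : Fin n → ℝ) : ℝ :=
  (1/2) * ∑ i, (Y i - μ i)^2 + lam * cutW E w μ

/-- `μt` is a `δℤ`-expansion of `μ`: some subset of coordinates is replaced by a
single common value `c ∈ δℤ`. -/
def IsDeltaExpansion (δ : ℝ) {n : ℕ} (μ μt : Fin n → ℝ) : Prop :=
  ∃ c : ℝ, (∃ m : ℤ, c = δ * m) ∧ ∀ i, μt i = μ i ∨ μt i = c

lemma sym2_ne_iff {n : ℕ} (f : Fin n → ℝ) (i j : Fin n) :
    (∃ a ∈ (s(i, j) : Sym2 (Fin n)), ∃ b ∈ (s(i, j) : Sym2 (Fin n)), f a ≠ f b) ↔ f i ≠ f j := by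
  constructor
  · rintro ⟨a, ha, b, hb, hab⟩
    rw [Sym2.mem_iff] at ha hb
    rcases ha with rfl | rfl <;> rcases hb with rfl | rfl
    · exact (hab rfl).elim
    · exact hab
    · exact hab.symm
    · exact (hab rfl).elim
  · intro h
    exact ⟨i, Sym2.mem_mk_left i j, j, Sym2.mem_mk_right i j, h⟩

theorem stmt0 {n : ℕ} (E : Finset (Sym2 (Fin n)))
    (hconn : (SimpleGraph.fromEdgeSet (E : Set (Sym2 (Fin n)))).Connected)
    (w : Sym2 (Fin n) → ℝ) (hw : ∀ e, 0 ≤ w e)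
    (Y : Fin n → ℝ) (lam : ℝ) (hlam : 0 ≤ lam)
    (δ τ : ℝ) (hδ : 0 < δ) (hτ : 0 ≤ τ)
    (μhat : Fin n → ℝ)
    (hloc : ∀ μt, IsDeltaExpansion δ μhat μt → Fw E w Y lam μhat - τ ≤ Fw E w Y lam μt)
    (μ : Fin n → ℝ) (hμ : ∀ i, ∃ m : ℤ, μ i = δ * m)
    (k : ℕ) (hk : (Finset.univ.image μ).card = k) :
    Fw E w Y lam μhat ≤ (1/2) * ∑ i, (Y i - μ i)^2 + 2 * lam * cutW E w μ + k * τ := by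
  classical
  set C : Finset ℝ := Finset.univ.image μ with hC
  set μc : ℝ → Fin n → ℝ := fun c i => if μ i = c then c else μhat i with hμcdef
  have hmem : ∀ i : Fin n, μ i ∈ C := fun i => Finset.mem_image_of_mem μ (mem_univ i)
  have hk1 : ∀ i : Fin n, 1 ≤ k := fun i => hk ▸ Finset.card_pos.mpr ⟨μ i, hmem i⟩
  have hcast : ∀ i : Fin n, ((k - 1 : ℕ) : ℝ) = (k : ℝ) - 1 := fun i => by
    have := hk1 i; push_cast [Nat.cast_sub this]; ring
  -- each μc c is an expansion
  have hexp : ∀ c ∈ C, IsDeltaExpansion δ μhat (μc c) := by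
    intro c hc
    obtain ⟨i, -, hi⟩ := Finset.mem_image.mp hc
    refine ⟨c, ?_, ?_⟩
    · obtain ⟨m, hm⟩ := hμ i; exact ⟨m, by rw [← hi, hm]⟩
    · intro j
      by_cases h : μ j = c
      · right; simp [hμcdef, h]
      · left; simp [hμcdef, h]
  -- summed local optimality
  have h1 : (k : ℝ) * (Fw E w Y lam μhat - τ) ≤ ∑ c ∈ C, Fw E w Y lam (μc c) := by
    have := Finset.sum_le_sum (fun c hc => hloc (μc c) (hexp c hc))
    calc (k : ℝ) * (Fw E w Y lam μhat - τ)
        = ∑ _c ∈ C, (Fw E w Y lam μhat - τ) := by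
          rw [Finset.sum_const, nsmul_eq_mul, hk]
      _ ≤ _ := this
  -- quadratic part
  have hquad : ∑ c ∈ C, ∑ i, (Y i - μc c i)^2
      = ∑ i, (Y i - μ i)^2 + ((k:ℝ) - 1) * ∑ i, (Y i - μhat i)^2 := by
    rw [Finset.sum_comm]
    have hpt : ∀ i : Fin n, ∑ c ∈ C, (Y i - μc c i)^2
        = (Y i - μ i)^2 + ((k:ℝ)-1) * (Y i - μhat i)^2 := by
      intro i
      rw [← Finset.add_sum_erase C _ (hmem i)]
      have h2 : ∀ c ∈ C.erase (μ i), (Y i - μc c i)^2 = (Y i - μhat i)^2 := by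
        intro c hc
        have hne : μ i ≠ c := fun h => (Finset.ne_of_mem_erase hc) h.symm
        simp [hμcdef, hne]
      rw [Finset.sum_congr rfl h2, Finset.sum_const, nsmul_eq_mul,
        Finset.card_erase_of_mem (hmem i), hk, hcast i]
      simp [hμcdef]
    rw [Finset.sum_congr rfl (fun i _ => hpt i), Finset.sum_add_distrib, ← Finset.mul_sum]
  -- cut part
  have hcut : ∑ c ∈ C, cutW E w (μc c)
      ≤ ((k:ℝ) - 1) * cutW E w μhat + 2 * cutW E w μ := by
    unfold cutW
    rw [Finset.sum_comm, Finset.mul_sum, Finset.mul_sum, ← Finset.sum_add_distrib]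
    apply Finset.sum_le_sum
    intro e he
    have hWe := hw e
    clear he
    induction e using Sym2.ind with
    | _ i j =>
      simp only [sym2_ne_iff]
      set W : ℝ := w s(i, j) with hWdef
      set base : ℝ := if μhat i ≠ μhat j then W else 0 with hbase
      set ind2 : ℝ := if μ i ≠ μ j then W else 0 with hind2
      have hbase0 : 0 ≤ base := by rw [hbase]; split <;> simp [hWe]
      have hind20 : 0 ≤ ind2 := by rw [hind2]; split <;> simp [hWe]
      rw [← Finset.sum_filter_add_sum_filter_not C (fun c => c = μ i ∨ c = μ j)]
      have hA : ∑ c ∈ C.filter (fun c => c = μ i ∨ c = μ j),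
          (if μc c i ≠ μc c j then W else 0) ≤ 2 * ind2 := by
        have hterm : ∀ c ∈ C.filter (fun c => c = μ i ∨ c = μ j),
            (if μc c i ≠ μc c j then W else 0) ≤ ind2 := by
          intro c hc
          by_cases hij : μ i = μ j
          · obtain ⟨-, hcT⟩ := Finset.mem_filter.mp hc
            have hci : μ i = c := by
              rcases hcT with rfl | rfl
              · rfl
              · exact hij
            have hcj : μ j = c := by rw [← hij]; exact hci
            have : μc c i = μc c j := by simp [hμcdef, hci, hcj]
            rw [if_neg (by simp [this])]
            exact hind20
          · rw [hind2, if_pos hij]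
            split
            · exact le_refl W
            · exact hWe
        calc ∑ c ∈ C.filter (fun c => c = μ i ∨ c = μ j),
              (if μc c i ≠ μc c j then W else 0)
            ≤ (C.filter (fun c => c = μ i ∨ c = μ j)).card • ind2 :=
              Finset.sum_le_card_nsmul _ _ _ hterm
          _ = ((C.filter (fun c => c = μ i ∨ c = μ j)).card : ℝ) * ind2 := by
              rw [nsmul_eq_mul]
          _ ≤ 2 * ind2 := by
              apply mul_le_mul_of_nonneg_right _ hind20
              have hsub : C.filter (fun c => c = μ i ∨ c = μ j) ⊆ ({μ i, μ j} : Finset ℝ) := by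
                intro c hc
                obtain ⟨-, hcT⟩ := Finset.mem_filter.mp hc
                simp [hcT]
              have := Finset.card_le_card hsub
              have h2 : ({μ i, μ j} : Finset ℝ).card ≤ 2 := by
                apply le_trans (Finset.card_insert_le _ _); simp
              exact_mod_cast le_trans this h2
      have hB : ∑ c ∈ C.filter (fun c => ¬(c = μ i ∨ c = μ j)),
          (if μc c i ≠ μc c j then W else 0) ≤ ((k:ℝ) - 1) * base := by
        have hterm : ∀ c ∈ C.filter (fun c => ¬(c = μ i ∨ c = μ j)),
            (if μc c i ≠ μc c j then W else 0) = base := by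
          intro c hc
          obtain ⟨-, hcT⟩ := Finset.mem_filter.mp hc
          push_neg at hcT
          have h1 : μ i ≠ c := fun h => hcT.1 h.symm
          have h2 : μ j ≠ c := fun h => hcT.2 h.symm
          simp [hμcdef, h1, h2, hbase]
        rw [Finset.sum_congr rfl hterm, Finset.sum_const, nsmul_eq_mul]
        apply mul_le_mul_of_nonneg_right _ hbase0
        have hsub : C.filter (fun c => ¬(c = μ i ∨ c = μ j)) ⊆ C.erase (μ i) := by
          intro c hc
          obtain ⟨hcC, hcT⟩ := Finset.mem_filter.mp hc
          push_neg at hcT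
          exact Finset.mem_erase.mpr ⟨fun h => hcT.1 h, hcC⟩
        have := Finset.card_le_card hsub
        rw [Finset.card_erase_of_mem (hmem i), hk] at this
        calc ((C.filter (fun c => ¬(c = μ i ∨ c = μ j))).card : ℝ)
            ≤ ((k - 1 : ℕ) : ℝ) := by exact_mod_cast this
          _ = (k : ℝ) - 1 := hcast i
      linarith
  -- assemble
  have hF : ∑ c ∈ C, Fw E w Y lam (μc c)
      = (1/2) * (∑ c ∈ C, ∑ i, (Y i - μc c i)^2) + lam * ∑ c ∈ C, cutW E w (μc c) := by
    unfold Fw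
    rw [Finset.sum_add_distrib, ← Finset.mul_sum, ← Finset.mul_sum]
  have hcut' : lam * ∑ c ∈ C, cutW E w (μc c)
      ≤ lam * (((k:ℝ) - 1) * cutW E w μhat + 2 * cutW E w μ) :=
    mul_le_mul_of_nonneg_left hcut hlam
  have hmain : (k : ℝ) * (Fw E w Y lam μhat - τ)
      ≤ (1/2) * (∑ i, (Y i - μ i)^2 + ((k:ℝ) - 1) * ∑ i, (Y i - μhat i)^2)
        + lam * (((k:ℝ) - 1) * cutW E w μhat + 2 * cutW E w μ) := by
    rw [← hquad]
    calc (k : ℝ) * (Fw E w Y lam μhat - τ) ≤ ∑ c ∈ C, Fw E w Y lam (μc c) := h1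
      _ = _ := hF
      _ ≤ _ := by linarith
  have hFhat : Fw E w Y lam μhat
      = (1/2) * ∑ i, (Y i - μhat i)^2 + lam * cutW E w μhat := rfl
  rw [hFhat] at hmain ⊢
  nlinarith [hmain]

end
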